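/- Let φ : 𝔻 → 𝔻 be holomorphic and suppose there exists an infinite sequence (z_k) of distinct points in 𝔻 such that each z_k has at least two distinct preimages under φ. Then the closure of the range of the composition operator C_φ : H² → H², f ↦ f∘φ, has infinite codimension; i.e., the orthogonal complement of Im(C_φ) in H² is infinite-dimensional. -/

import Mathlib

open Complex Metric Filter MeasureTheory Set
open scoped NNReal ENNReal Topology

noncomputable section

/-- The Hardy space `H²`, modelled as the space of square-summable Taylor
coefficient sequences, i.e. `ℓ²(ℕ, ℂ)` with its Hilbert space structure. -/
abbrev H2 : Type := lp (fun _ : ℕ => ℂ) 2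

/-- Evaluation of an element of `H²` at a point of the unit disc, via its power series. -/
noncomputable def evalH2 (f : H2) (z : ℂ) : ℂ := ∑' n : ℕ, f n * z ^ n

/-- The reproducing kernel of `H²` at `w ∈ 𝔻` (junk value `0` if `‖w‖ ≥ 1`). -/
noncomputable def kern (w : ℂ) : H2 :=
  if h : ‖w‖ < 1 then
    ⟨fun n => (starRingEnd ℂ) w ^ n, by
      apply memℓp_gen
      have h2 : ‖w‖ ^ 2 < 1 := by nlinarith [norm_nonneg w]
      have hs : Summable fun n : ℕ => (‖w‖ ^ 2) ^ n :=
        summable_geometric_of_lt_one (by positivity) h2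
      convert hs using 2 with n
      rw [show ((2:ℝ≥0∞).toReal) = (2:ℝ) by simp]
      rw [norm_pow, RCLike.norm_conj, Real.rpow_two]
      ring⟩
  else 0

/-- `φ` is an inner function: its radial boundary values have modulus `1`
for almost every boundary angle. -/
def IsInnerFn (φ : ℂ → ℂ) : Prop :=
  ∀ᵐ θ : ℝ, Filter.Tendsto
    (fun r : ℝ => ‖φ ((r : ℂ) * Complex.exp ((θ : ℂ) * Complex.I))‖)
    (nhdsWithin 1 (Set.Iio 1)) (nhds 1)

lemma kern_coe (w : ℂ) (h : ‖w‖ < 1) : ⇑(kern w) = fun n => (starRingEnd ℂ) w ^ n := by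
  unfold kern; rw [dif_pos h]

/-- coercion as a linear map -/
def coeLM : H2 →ₗ[ℂ] (ℕ → ℂ) :=
  { toFun := fun f => ⇑f, map_add' := fun f g => lp.coeFn_add f g,
    map_smul' := fun c f => lp.coeFn_smul c f }

lemma kern_linearIndependent {ι : Type*} {p : ι → ℂ} (hp : ∀ i, ‖p i‖ < 1)
    (hinj : Function.Injective p) : LinearIndependent ℂ (fun i => kern (p i)) := by
  have hconj : Function.Injective fun i => powersHom ℂ ((starRingEnd ℂ) (p i)) := by
    intro i j hij
    have := congrArg (fun m : Multiplicative ℕ →* ℂ => m (Multiplicative.ofAdd 1)) hij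
    simp only [powersHom_apply, toAdd_ofAdd, pow_one] at this
    exact hinj (by simpa using congrArg (starRingEnd ℂ) this)
  have h1 : LinearIndependent ℂ
      (fun i => ((powersHom ℂ ((starRingEnd ℂ) (p i)) : Multiplicative ℕ →* ℂ) :
        Multiplicative ℕ → ℂ)) :=
    (linearIndependent_monoidHom (Multiplicative ℕ) ℂ).comp _ hconj
  have h2 : LinearIndependent ℂ (fun i => coeLM (kern (p i))) := by
    have hcoe : (fun i => coeLM (kern (p i))) = fun i =>
        ((powersHom ℂ ((starRingEnd ℂ) (p i)) : Multiplicative ℕ →* ℂ) :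
          Multiplicative ℕ → ℂ) := by
      funext i
      show ⇑(kern (p i)) = _
      rw [kern_coe _ (hp i)]
      rfl
    rw [hcoe]
    exact h1
  exact LinearIndependent.of_comp coeLM h2


/-- If infinitely many distinct points of `𝔻` have at least two distinct `φ`-preimages,
then the range of the composition operator `C_φ` on `H²` has infinite codimension. -/
theorem stmt8 (φ : ℂ → ℂ)
    (hanal : DifferentiableOn ℂ φ (ball (0:ℂ) 1))
    (hmaps : Set.MapsTo φ (ball (0:ℂ) 1) (ball (0:ℂ) 1))
    (z : ℕ → ℂ) (hz : ∀ k, z k ∈ ball (0:ℂ) 1) (hzinj : Function.Injective z)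
    (hpre : ∀ k, ∃ w w' : ℂ, w ∈ ball (0:ℂ) 1 ∧ w' ∈ ball (0:ℂ) 1 ∧ w ≠ w' ∧
      φ w = z k ∧ φ w' = z k)
    (T : H2 →L[ℂ] H2)
    (hT : ∀ (f : H2), ∀ ζ ∈ ball (0:ℂ) 1, evalH2 (T f) ζ = evalH2 f (φ ζ)) :
    ¬ FiniteDimensional ℂ ↥((LinearMap.range (T : H2 →ₗ[ℂ] H2))ᗮ) := by
  choose w w' hw hw' hne hφw hφw' using hpre
  -- the combined family of preimage points, indexed by ℕ × Bool
  set p : ℕ × Bool → ℂ := fun i => if i.2 then w i.1 else w' i.1 with hp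
  have hpball : ∀ i, p i ∈ ball (0:ℂ) 1 := by
    rintro ⟨k, b⟩; cases b <;> simp [hp, hw, hw']
  have hpφ : ∀ i, φ (p i) = z i.1 := by
    rintro ⟨k, b⟩; cases b <;> simp [hp, hφw, hφw']
  have hpinj : Function.Injective p := by
    rintro ⟨k, b⟩ ⟨k', b'⟩ h
    have hk : k = k' := hzinj (by rw [← hpφ (k, b), ← hpφ (k', b'), h])
    subst hk
    cases b <;> cases b'
    · rfl
    · exact absurd ((show w' k = w k by simpa [hp] using h).symm) (hne k)
    · exact absurd (show w k = w' k by simpa [hp] using h) (hne k)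
    · rfl
  have hpnorm : ∀ i, ‖p i‖ < 1 := fun i => by simpa using hpball i
  -- the kernels are linearly independent
  have hgli : LinearIndependent ℂ (fun i => kern (p i)) :=
    kern_linearIndependent hpnorm hpinj
  -- reproducing property
  have hrep : ∀ (f : H2) (ζ : ℂ), ‖ζ‖ < 1 → inner ℂ (kern ζ) f = evalH2 f ζ := by
    intro f ζ hζ
    rw [lp.inner_eq_tsum]
    unfold evalH2
    congr 1
    funext n
    have : (kern ζ) n = (starRingEnd ℂ) ζ ^ n := by rw [kern_coe _ hζ]
    rw [this, RCLike.inner_apply, map_pow, Complex.conj_conj]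
  -- the difference kernels lie in the orthogonal complement
  set f : ℕ → H2 := fun k => kern (w k) - kern (w' k) with hf
  have hmem : ∀ k, f k ∈ (LinearMap.range (T : H2 →ₗ[ℂ] H2))ᗮ := by
    intro k
    rw [Submodule.mem_orthogonal]
    rintro u ⟨h, rfl⟩
    have e1 : inner ℂ (kern (w k)) ((T : H2 →ₗ[ℂ] H2) h) = (evalH2 h (z k) : ℂ) := by
      rw [hrep _ _ (by simpa using hw k)]
      rw [show ((T : H2 →ₗ[ℂ] H2) h) = T h from rfl, hT h (w k) (hw k), hφw k]
    have e2 : inner ℂ (kern (w' k)) ((T : H2 →ₗ[ℂ] H2) h) = (evalH2 h (z k) : ℂ) := by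
      rw [hrep _ _ (by simpa using hw' k)]
      rw [show ((T : H2 →ₗ[ℂ] H2) h) = T h from rfl, hT h (w' k) (hw' k), hφw' k]
    show (inner ℂ ((T : H2 →ₗ[ℂ] H2) h) (kern (w k) - kern (w' k)) : ℂ) = 0
    rw [inner_sub_right, ← inner_conj_symm, ← inner_conj_symm ((T : H2 →ₗ[ℂ] H2) h),
      e1, e2, sub_self]
  -- linear independence of the differences
  have hfli : LinearIndependent ℂ f := by
    rw [linearIndependent_iff']
    intro s c hsum k hk
    have key := linearIndependent_iff'.mp hgli (s ×ˢ (Finset.univ : Finset Bool))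
      (fun i => if i.2 then c i.1 else -c i.1) ?_ (k, true) (by simp [hk])
    · simpa using key
    · rw [Finset.sum_product]
      rw [← hsum]
      apply Finset.sum_congr rfl
      intro x _
      have hpt : p (x, true) = w x := by simp [hp]
      have hpf : p (x, false) = w' x := by simp [hp]
      rw [Fintype.sum_bool, hpt, hpf]
      show (if true = true then c x else -c x) • kern (w x) +
        (if false = true then c x else -c x) • kern (w' x)
        = c x • (kern (w x) - kern (w' x))
      rw [if_pos rfl, if_neg (by simp), smul_sub, neg_smul]
      abel
  -- conclude
  intro hfin
  have : LinearIndependent ℂ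
      (fun k => (⟨f k, hmem k⟩ : ((LinearMap.range (T : H2 →ₗ[ℂ] H2))ᗮ))) := by
    apply LinearIndependent.of_comp ((LinearMap.range (T : H2 →ₗ[ℂ] H2))ᗮ).subtype
    exact hfli
  exact Module.Finite.not_linearIndependent_of_infinite _ this
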